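/- Let (g, π, V, ρ) be a cyclic quadruple over F, where g is a Lie algebra, π: g → gl(V) a representation, and ρ: g → V* linear with ρ([x,y]) + π*(x)ρ(y) − π*(y)ρ(x) = 0 for all x,y ∈ g. Let B_g be any cyclic metric on g. Then the metric Lie algebra L = g +_π V with Abelian ideal V, bracket [(x,u),(y,v)] = ([x,y], π(x)v − π(y)u), and bilinear form B_L((x,u),(y,v)) = B_g(x,y) + ρ(x)(v) + ρ(y)(u), is a cyclic metric Lie algebra. -/

import Mathlib

attribute [local instance 100] LieRing.ofAssociativeRing

/-- Given a cyclic quadruple (g, π, V, ρ) and any cyclic metric B_g on g,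
the metric Lie algebra L = g +_π V, with bracket [(x,u),(y,v)] = ([x,y], π(x)v − π(y)u)
and bilinear form B_L((x,u),(y,v)) = B_g(x,y) + ρ(x)(v) + ρ(y)(u),
is a cyclic metric Lie algebra (B_L is symmetric and cyclic). -/
theorem cyclic_quadruple_yields_cyclic_metric
    {F L V : Type*} [Field F] [LieRing L] [LieAlgebra F L]
    [AddCommGroup V] [Module F V]
    (π : L →ₗ⁅F⁆ Module.End F V)
    (ρ : L →ₗ[F] (V →ₗ[F] F))
    (hquad : ∀ x y : L, ∀ v : V, ρ ⁅x, y⁆ v - ρ y (π x v) + ρ x (π y v) = 0)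
    (Bg : L →ₗ[F] L →ₗ[F] F)
    (hBgsymm : ∀ x y : L, Bg x y = Bg y x)
    (hBgcyc : ∀ x y z : L, Bg ⁅x, y⁆ z + Bg ⁅y, z⁆ x + Bg ⁅z, x⁆ y = 0) :
    (∀ a b : L × V,
        Bg a.1 b.1 + ρ a.1 b.2 + ρ b.1 a.2 = Bg b.1 a.1 + ρ b.1 a.2 + ρ a.1 b.2) ∧
    (∀ a b c : L × V,
        (Bg ⁅a.1, b.1⁆ c.1 + ρ ⁅a.1, b.1⁆ c.2 + ρ c.1 (π a.1 b.2 - π b.1 a.2)) +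
        (Bg ⁅b.1, c.1⁆ a.1 + ρ ⁅b.1, c.1⁆ a.2 + ρ a.1 (π b.1 c.2 - π c.1 b.2)) +
        (Bg ⁅c.1, a.1⁆ b.1 + ρ ⁅c.1, a.1⁆ b.2 + ρ b.1 (π c.1 a.2 - π a.1 c.2)) = 0) := by
  constructor
  · intro a b; rw [hBgsymm]; ring
  · intro a b c
    simp only [map_sub]
    linear_combination hBgcyc a.1 b.1 c.1 + hquad a.1 b.1 c.2 + hquad b.1 c.1 a.2 +
      hquad c.1 a.1 b.2
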